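/- Let P be a path with two edges in the complete graph K_5 and let e be an edge of K_5 vertex-disjoint from P. Then there is no Hamiltonian cycle decomposition (C_1, C_2) of K_5 such that both edges of P lie in C_1 and e lies in C_2. -/

import Mathlib

open SimpleGraph

/-- `C` is the edge set of a Hamiltonian cycle of `G`. -/
def IsHamCycleEdgeSet {V : Type*} [DecidableEq V] (G : SimpleGraph V)
    (C : Set (Sym2 V)) : Prop :=
  ∃ (v : V) (w : G.Walk v v), w.IsHamiltonianCycle ∧ C = {e | e ∈ w.edges}

/-- `C = (C 0, …, C (n-1))` is a Hamiltonian cycle decomposition of `G`: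
a partition of the edge set of `G` into parts, each of which is the edge set of a
Hamiltonian cycle of `G`. -/
def IsHamDecomp {V : Type*} [DecidableEq V] (G : SimpleGraph V) {n : ℕ}
    (C : Fin n → Set (Sym2 V)) : Prop :=
  (∀ i, IsHamCycleEdgeSet G (C i)) ∧
  Pairwise (Function.onFun Disjoint C) ∧
  (⋃ i, C i) = G.edgeSet

/-- `H` is rainbow in the decomposition `C`: no two edges of `H` lie in the same part. -/
def IsRainbowIn {V : Type*} {n : ℕ} (H : SimpleGraph V)
    (C : Fin n → Set (Sym2 V)) : Prop :=
  ∀ i : Fin n, ∀ e₁ ∈ H.edgeSet, ∀ e₂ ∈ H.edgeSet, e₁ ∈ C i → e₂ ∈ C i → e₁ = e₂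

/-- A linear forest: an acyclic graph with maximum degree at most 2. -/
def IsLinearForest {V : Type*} (G : SimpleGraph V) : Prop :=
  G.IsAcyclic ∧ ∀ v, (G.neighborSet v).ncard ≤ 2

private lemma sum_ite_mem_sym2 {V : Type*} [Fintype V] [DecidableEq V] (e : Sym2 V)
    (he : ¬ e.IsDiag) : ∑ u : V, (if u ∈ e then 1 else 0) = 2 := by
  induction e using Sym2.inductionOn with
  | hf p q =>
    rw [Sym2.mk_isDiag_iff] at he
    have hpt : ∀ u : V, (if u ∈ s(p, q) then 1 else 0)
        = (if u = p then 1 else 0) + (if u = q then 1 else 0) := by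
      intro u
      by_cases h1 : u = p <;> by_cases h2 : u = q <;> simp_all [Sym2.mem_iff]
    simp only [hpt, Finset.sum_add_distrib, Finset.sum_ite_eq', Finset.mem_univ, if_true]

private lemma sum_countP_mem {V : Type*} [Fintype V] [DecidableEq V] (l : List (Sym2 V))
    (h : ∀ e ∈ l, ¬ e.IsDiag) :
    ∑ u : V, l.countP (fun e => decide (u ∈ e)) = 2 * l.length := by
  induction l with
  | nil => simp
  | cons e t ih =>
    simp only [List.countP_cons, List.length_cons]
    rw [Finset.sum_add_distrib, ih (fun e' he' => h e' (List.mem_cons_of_mem _ he'))]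
    have : ∑ u : V, (if decide (u ∈ e) = true then 1 else 0) = 2 := by
      simpa using sum_ite_mem_sym2 e (h e List.mem_cons_self)
    rw [this]; ring

private lemma ham_countP_eq_two {G : SimpleGraph (Fin 5)} {v : Fin 5} {w : G.Walk v v}
    (hw : w.IsHamiltonianCycle) (u : Fin 5) :
    w.edges.countP (fun e => decide (u ∈ e)) = 2 := by
  set f : Fin 5 → ℕ := fun u => w.edges.countP (fun e => decide (u ∈ e)) with hf
  have heven : ∀ u, Even (f u) := fun u =>
    (hw.isCycle.isTrail.even_countP_edges_iff u).2 (fun h => absurd rfl h)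
  have hge : ∀ u, 1 ≤ f u := by
    intro u
    have hu := hw.mem_support u
    have hperm := (w.rotate_edges u hu).perm
    have : f u = (w.rotate u hu).edges.countP (fun e => decide (u ∈ e)) :=
      (hperm.countP_eq _).symm
    rw [this]
    have hnn := (hw.isCycle.rotate hu).not_nil
    rw [SimpleGraph.Walk.not_nil_iff] at hnn
    obtain ⟨z, hadj, q, hq⟩ := hnn
    rw [hq]
    simp [List.countP_cons]
  have hlen : w.edges.length = 5 := by
    rw [SimpleGraph.Walk.length_edges, hw.length_eq]; simp
  have hsum : ∑ u : Fin 5, f u = 10 := by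
    rw [hf]
    rw [sum_countP_mem _ (fun e he => G.not_isDiag_of_mem_edgeSet (w.edges_subset_edgeSet he))]
    rw [hlen]
  have h2 : ∀ u, 2 ≤ f u := by
    intro u
    obtain ⟨k, hk⟩ := heven u
    have := hge u
    omega
  by_contra hne
  have hlt : (2 : ℕ) < f u := lt_of_le_of_ne (h2 u) (Ne.symm hne)
  have : ∑ _u : Fin 5, 2 < ∑ u : Fin 5, f u :=
    Finset.sum_lt_sum (fun i _ => h2 i) ⟨u, Finset.mem_univ u, hlt⟩
  simp [hsum] at this
theorem no_extension_P3_K2 (a b c x y : Fin 5)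
    (hinj : Function.Injective ![a, b, c, x, y]) :
    ¬∃ C : Fin 2 → Set (Sym2 (Fin 5)),
      IsHamDecomp (⊤ : SimpleGraph (Fin 5)) C ∧
      s(a, b) ∈ C 0 ∧ s(b, c) ∈ C 0 ∧ s(x, y) ∈ C 1 := by
  rintro ⟨C, ⟨hham, hdisj, -⟩, hab, hbc, hxy⟩
  -- distinctness
  have ne' : ∀ i j : Fin 5, i ≠ j → ![a,b,c,x,y] i ≠ ![a,b,c,x,y] j := fun i j h => hinj.ne h
  have hab' : a ≠ b := ne' 0 1 (by decide)
  have hac : a ≠ c := ne' 0 2 (by decide)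
  have hax : a ≠ x := ne' 0 3 (by decide)
  have hay : a ≠ y := ne' 0 4 (by decide)
  have hbc' : b ≠ c := ne' 1 2 (by decide)
  have hbx : b ≠ x := ne' 1 3 (by decide)
  have hby : b ≠ y := ne' 1 4 (by decide)
  have hcx : c ≠ x := ne' 2 3 (by decide)
  have hcy : c ≠ y := ne' 2 4 (by decide)
  have hxy' : x ≠ y := ne' 3 4 (by decide)
  have hsurj : ∀ t : Fin 5, t = a ∨ t = b ∨ t = c ∨ t = x ∨ t = y := by
    intro t
    obtain ⟨i, hi⟩ := (Finite.injective_iff_surjective.mp hinj) t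
    fin_cases i <;> simp_all
  obtain ⟨v, w, hw, hC0⟩ := hham 0
  rw [hC0] at hab hbc
  simp only [Set.mem_setOf_eq] at hab hbc
  -- The finset of edges of the cycle
  set F : Finset (Sym2 (Fin 5)) := w.edges.toFinset with hF
  have hnodup := hw.isCycle.isTrail.edges_nodup
  have hcard : ∀ u : Fin 5, (F.filter (fun e => u ∈ e)).card = 2 := by
    intro u
    have h1 : F.filter (fun e => u ∈ e) = (w.edges.filter (fun e => decide (u ∈ e))).toFinset := by
      rw [List.toFinset_filter]
      simp [hF]
    rw [h1, List.toFinset_card_of_nodup (hnodup.filter _), ← List.countP_eq_length_filter]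
    exact ham_countP_eq_two hw u
  have habF : s(a, b) ∈ F := List.mem_toFinset.mpr hab
  have hbcF : s(b, c) ∈ F := List.mem_toFinset.mpr hbc
  -- edges at b are exactly ab and bc
  have hBfilter : ({s(a,b), s(b,c)} : Finset (Sym2 (Fin 5))) = F.filter (fun e => b ∈ e) := by
    apply Finset.eq_of_subset_of_card_le
    · intro e he
      simp only [Finset.mem_insert, Finset.mem_singleton] at he
      rcases he with rfl | rfl <;> simp [Finset.mem_filter, habF, hbcF]
    · rw [hcard b, Finset.card_insert_of_notMem (by simp [Sym2.eq_iff]; tauto),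
        Finset.card_singleton]
  have hbmem : ∀ e ∈ F, b ∈ e → e = s(a,b) ∨ e = s(b,c) := by
    intro e heF hbe
    have : e ∈ ({s(a,b), s(b,c)} : Finset (Sym2 (Fin 5))) := by
      rw [hBfilter]; exact Finset.mem_filter.mpr ⟨heF, hbe⟩
    simpa using this
  -- suppose xy not in F
  have hxyF : s(x, y) ∈ F := by
    by_contra hxyF
    -- edges at x are exactly xa and xc (similarly for y)
    have main : ∀ z z' : Fin 5, z = x ∧ z' = y ∨ z = y ∧ z' = x →
        s(z, a) ∈ F ∧ s(z, c) ∈ F := by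
      intro z z' hz
      have hza : z ≠ a := by
        rcases hz with ⟨rfl,-⟩|⟨rfl,-⟩
        exacts [Ne.symm hax, Ne.symm hay]
      have hzb : z ≠ b := by
        rcases hz with ⟨rfl,-⟩|⟨rfl,-⟩
        exacts [Ne.symm hbx, Ne.symm hby]
      have hzc : z ≠ c := by
        rcases hz with ⟨rfl,-⟩|⟨rfl,-⟩
        exacts [Ne.symm hcx, Ne.symm hcy]
      have hzz' : s(z, z') = s(x, y) := by
        rcases hz with ⟨rfl,rfl⟩|⟨rfl,rfl⟩ <;> simp [Sym2.eq_iff]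
      have hsub : F.filter (fun e => z ∈ e) ⊆ {s(z, a), s(z, c)} := by
        intro e he
        rw [Finset.mem_filter] at he
        obtain ⟨heF, hze⟩ := he
        obtain ⟨t, rfl⟩ := Sym2.mem_iff_exists.mp hze
        have hnd : ¬ (s(z, t)).IsDiag :=
          SimpleGraph.not_isDiag_of_mem_edgeSet _
            (w.edges_subset_edgeSet (List.mem_toFinset.mp heF))
        rw [Sym2.mk_isDiag_iff] at hnd
        rcases hsurj t with rfl | rfl | rfl | rfl | rfl
        · simp
        · exfalso
          rcases hbmem _ heF (by simp) with h | h <;>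
            · rw [Sym2.eq_iff] at h; tauto
        · simp
        · exfalso
          rcases hz with ⟨rfl, rfl⟩|⟨rfl, rfl⟩
          · exact hnd rfl
          · exact hxyF (by rwa [Sym2.eq_swap] at heF)
        · exfalso
          rcases hz with ⟨rfl, rfl⟩|⟨rfl, rfl⟩
          · exact hxyF heF
          · exact hnd rfl
      have hc2 : ({s(z, a), s(z, c)} : Finset (Sym2 (Fin 5))).card ≤ 2 :=
        Finset.card_insert_le _ _ |>.trans (by simp)
      have heq : F.filter (fun e => z ∈ e) = {s(z, a), s(z, c)} :=
        Finset.eq_of_subset_of_card_le hsub (by rw [hcard z]; exact hc2)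
      constructor
      · have : s(z, a) ∈ F.filter (fun e => z ∈ e) := by rw [heq]; simp
        exact (Finset.mem_filter.mp this).1
      · have : s(z, c) ∈ F.filter (fun e => z ∈ e) := by rw [heq]; simp
        exact (Finset.mem_filter.mp this).1
    obtain ⟨hxa, hxc⟩ := main x y (Or.inl ⟨rfl, rfl⟩)
    obtain ⟨hya, hyc⟩ := main y x (Or.inr ⟨rfl, rfl⟩)
    -- three distinct edges at a
    have hsubA : ({s(a,b), s(x,a), s(y,a)} : Finset (Sym2 (Fin 5))) ⊆
        F.filter (fun e => a ∈ e) := by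
      intro e he
      simp only [Finset.mem_insert, Finset.mem_singleton] at he
      rcases he with rfl | rfl | rfl <;> rw [Finset.mem_filter] <;>
        exact ⟨by assumption, by simp⟩
    have hcard3 : ({s(a,b), s(x,a), s(y,a)} : Finset (Sym2 (Fin 5))).card = 3 := by
      rw [Finset.card_insert_of_notMem (by simp [Sym2.eq_iff]; tauto),
        Finset.card_insert_of_notMem (by simp [Sym2.eq_iff]; tauto),
        Finset.card_singleton]
    have := Finset.card_le_card hsubA
    rw [hcard3, hcard a] at this
    omega
  -- xy in both C 0 and C 1: contradiction
  have h01 : (0 : Fin 2) ≠ 1 := by decide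
  have hd := hdisj h01
  exact Set.disjoint_left.mp hd (by rw [hC0]; exact Set.mem_setOf_eq ▸ List.mem_toFinset.mp hxyF) hxy
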